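/- Let η, ξ₁ ∈ ℂ, q = e^η, with q^{2m} ≠ 1 for all 1 ≤ m ≤ ℓ, and let 1 ≤ i,j ≤ ℓ. For every fixed subset A ⊆ {1,…,ℓ} with |A| = i, the spin-ℓ/2 elementary operator satisfies the reduction formula ||ℓ,i⟩⟨ℓ,j|| = [ℓ choose i]_q [ℓ choose j]_q^{−1} q^{i(i−1)/2 − j(j−1)/2} e^{−(i−j)ξ₁} · P^{(ℓ)} · Σ_{B⊆{1,…,ℓ}, |B|=j} χ |1_A⟩⟨1_B| χ^{−1}, where χ = ⊗_{k=1}^{ℓ} diag(1, e^{ξ₁−(k−1)η}); in particular the right-hand side is independent of the choice of A. -/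
import Mathlib


noncomputable section

/-- The q-integer `[n]_q = (qⁿ − q⁻ⁿ)/(q − q⁻¹)`. -/
def qint (q : ℂ) (n : ℕ) : ℂ := (q ^ (n : ℤ) - q ^ (-(n : ℤ))) / (q - q⁻¹)

/-- The q-factorial `[n]_q! = ∏_{m=1}^n [m]_q`. -/
def qfact (q : ℂ) (n : ℕ) : ℂ := ∏ m ∈ Finset.range n, qint q (m + 1)

/-- The q-binomial coefficient `[l choose n]_q`. -/
def qbinom (q : ℂ) (l n : ℕ) : ℂ := qfact q l / (qfact q (l - n) * qfact q n)
/-- Index of the standard basis of `(ℂ²)^{⊗l}`: spin configurations `{0,1}^l`. -/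
abbrev SpinIdx (l : ℕ) := Fin l → Fin 2

/-- Vectors in `(ℂ²)^{⊗l}`. -/
abbrev SpinVec (l : ℕ) := SpinIdx l → ℂ

/-- Operators (matrices) on `(ℂ²)^{⊗l}`. -/
abbrev SpinOp (l : ℕ) := Matrix (SpinIdx l) (SpinIdx l) ℂ

/-- The indicator configuration of a subset `A`: down spins exactly on `A`. -/
def indFun {l : ℕ} (A : Finset (Fin l)) : SpinIdx l := fun k => if k ∈ A then 1 else 0

/-- The standard basis vector `|1_A⟩` with down spins exactly on `A`. -/
def bvec {l : ℕ} (A : Finset (Fin l)) : SpinVec l := fun ε => if ε = indFun A then 1 else 0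

/-- `Σ_{a ∈ A} a`, where the site `k : Fin l` has 1-based number `k+1 ∈ {1,…,l}`. -/
def siteSum {l : ℕ} (A : Finset (Fin l)) : ℤ := ∑ a ∈ A, ((a : ℤ) + 1)

/-- Coefficient `q^{(Σ_{a∈A} a) − i·l + i(i−1)/2}`. -/
def hwt (q : ℂ) {l : ℕ} (i : ℕ) (A : Finset (Fin l)) : ℂ :=
  q ^ (siteSum A - (i : ℤ) * (l : ℤ) + (i : ℤ) * ((i : ℤ) - 1) / 2)

/-- The spin-`l/2` basis vector `||l,i⟩`. -/
def hv (q : ℂ) (l i : ℕ) : SpinVec l :=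
  ∑ A ∈ Finset.powersetCard i (Finset.univ : Finset (Fin l)), hwt q i A • bvec A

/-- The conjugate covector `⟨l,j||` (represented by its coefficient vector; the pairing
is the bilinear transpose pairing). -/
def cv (q : ℂ) (l j : ℕ) : SpinVec l :=
  ((qbinom q l j)⁻¹ * q ^ ((j : ℤ) * ((l : ℤ) - (j : ℤ)))) •
    ∑ B ∈ Finset.powersetCard j (Finset.univ : Finset (Fin l)), hwt q j B • bvec B

/-- The rank-one operator `|u⟩⟨v|` (transpose pairing). -/
def rankOne {l : ℕ} (u v : SpinVec l) : SpinOp l := Matrix.of fun ε ε' => u ε * v ε'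

/-- The spin-`l/2` projector `P^{(l)} = Σ_{n=0}^{l} ||l,n⟩⟨l,n||`. -/
def proj (q : ℂ) (l : ℕ) : SpinOp l :=
  ∑ n ∈ Finset.range (l + 1), rankOne (hv q l n) (cv q l n)

/-- The elementary operator `e_k^{a,b}` acting on the k-th tensor factor. -/
def elem {l : ℕ} (k : Fin l) (a b : Fin 2) : SpinOp l :=
  Matrix.of fun ε ε' => if ε k = a ∧ ε' k = b ∧ ∀ m, m ≠ k → ε m = ε' m then 1 else 0

/-- The ordered product `e_1^{e'_1,e_1} ⋯ e_l^{e'_l,e_l}`. -/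
def elemProd {l : ℕ} (e' e : Fin l → Fin 2) : SpinOp l :=
  (List.ofFn fun k : Fin l => elem k (e' k) (e k)).prod

/-- The gauge matrix `⊗_s diag(1, e^{w s})`. -/
def gaugeM {S : Type*} [Fintype S] [DecidableEq S] (w : S → ℂ) :
    Matrix (S → Fin 2) (S → Fin 2) ℂ :=
  Matrix.diagonal fun ε => ∏ s, if ε s = 1 then Complex.exp (w s) else 1

lemma indFun_inj {l : ℕ} : Function.Injective (indFun (l := l)) := by
  intro A B h
  ext s
  have hs := congrFun h s
  simp only [indFun] at hs
  by_cases h1 : s ∈ A <;> by_cases h2 : s ∈ B <;> simp_all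

lemma sum_mul_bvec {l : ℕ} (f : SpinVec l) (A : Finset (Fin l)) :
    ∑ ε, f ε * bvec A ε = f (indFun A) := by
  simp [bvec, mul_ite, Finset.sum_ite_eq']

lemma bvec_indFun {l : ℕ} (A B : Finset (Fin l)) :
    bvec B (indFun A) = if A = B then 1 else 0 := by
  simp [bvec, indFun_inj.eq_iff, eq_comm]

lemma rankOne_mul_rankOne {l : ℕ} (a b u v : SpinVec l) :
    rankOne a b * rankOne u v = (∑ ε, b ε * u ε) • rankOne a v := by
  ext ε ε'
  simp only [rankOne, Matrix.mul_apply, Matrix.smul_apply, Matrix.of_apply, smul_eq_mul,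
    Finset.sum_mul]
  exact Finset.sum_congr rfl fun κ _ => by ring

lemma cv_pair (q : ℂ) (l n : ℕ) (A : Finset (Fin l)) :
    ∑ ε, cv q l n ε * bvec A ε =
      if A.card = n then ((qbinom q l n)⁻¹ * q ^ ((n:ℤ)*((l:ℤ)-(n:ℤ)))) * hwt q n A else 0 := by
  rw [sum_mul_bvec]
  simp only [cv, Pi.smul_apply, Finset.sum_apply, Pi.smul_apply, smul_eq_mul, bvec_indFun,
    mul_ite, mul_one, mul_zero, Finset.sum_ite_eq, Finset.mem_powersetCard_univ]

lemma proj_mul_rankOne (q : ℂ) (l : ℕ) (A : Finset (Fin l)) (hAl : A.card ≤ l) (v : SpinVec l) :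
    proj q l * rankOne (bvec A) v =
      (((qbinom q l A.card)⁻¹ * q ^ ((A.card:ℤ)*((l:ℤ)-(A.card:ℤ)))) * hwt q A.card A) •
        rankOne (hv q l A.card) v := by
  unfold proj
  rw [Finset.sum_mul]
  rw [Finset.sum_congr rfl (fun n _ => rankOne_mul_rankOne (hv q l n) (cv q l n) (bvec A) v)]
  rw [Finset.sum_congr rfl (fun n _ => by rw [cv_pair])]
  rw [Finset.sum_congr rfl (fun n _ => by rw [ite_smul, zero_smul])]
  rw [Finset.sum_ite_eq (Finset.range (l+1)) A.card]
  simp [Nat.lt_succ_iff.mpr hAl]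

lemma gauge_diag_eval {l : ℕ} (w : Fin l → ℂ) (A : Finset (Fin l)) :
    (∏ s, if indFun A s = 1 then Complex.exp (w s) else 1) = Complex.exp (∑ s ∈ A, w s) := by
  rw [Complex.exp_sum]
  rw [show (fun s => if indFun A s = 1 then Complex.exp (w s) else 1)
      = fun s => if s ∈ A then Complex.exp (w s) else 1 from funext fun s => by
    by_cases h : s ∈ A <;> simp [indFun, h]]
  rw [Finset.prod_ite_mem Finset.univ A (fun s => Complex.exp (w s)), Finset.univ_inter]

lemma gauge_mul_rankOne {l : ℕ} (w : Fin l → ℂ) (A : Finset (Fin l)) (v : SpinVec l) :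
    gaugeM w * rankOne (bvec A) v = Complex.exp (∑ s ∈ A, w s) • rankOne (bvec A) v := by
  ext ε ε'
  simp only [gaugeM, Matrix.diagonal_mul, rankOne, Matrix.of_apply, Matrix.smul_apply,
    smul_eq_mul, bvec]
  by_cases h : ε = indFun A
  · subst h; simp [gauge_diag_eval, mul_comm]
  · simp [h]

lemma rankOne_mul_gauge {l : ℕ} (w : Fin l → ℂ) (u : SpinVec l) (B : Finset (Fin l)) :
    rankOne u (bvec B) * gaugeM w = Complex.exp (∑ s ∈ B, w s) • rankOne u (bvec B) := by
  ext ε ε'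
  simp only [gaugeM, Matrix.mul_diagonal, rankOne, Matrix.of_apply, Matrix.smul_apply,
    smul_eq_mul, bvec]
  by_cases h : ε' = indFun B
  · subst h; simp [gauge_diag_eval]; ring
  · simp [h]

lemma gauge_inv {l : ℕ} (w : Fin l → ℂ) :
    (gaugeM w)⁻¹ = gaugeM (fun s : Fin l => -(w s)) := by
  apply Matrix.inv_eq_right_inv
  simp only [gaugeM, Matrix.diagonal_mul_diagonal]
  rw [show (fun ε : SpinIdx l => (∏ s, if ε s = 1 then Complex.exp (w s) else 1) *
      ∏ s, if ε s = 1 then Complex.exp (-(w s)) else 1) = fun _ => (1:ℂ) from funext fun ε => by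
    rw [← Finset.prod_mul_distrib]
    apply Finset.prod_eq_one
    intro s _
    by_cases h : ε s = 1 <;> simp [h, ← Complex.exp_add]]
  exact Matrix.diagonal_one

lemma qint_ne_zero (q : ℂ) (hq : q ≠ 0) (hd : q - q⁻¹ ≠ 0) (m : ℕ) (hm : q ^ (2*m) ≠ 1) :
    qint q m ≠ 0 := by
  unfold qint
  apply div_ne_zero _ hd
  intro h
  apply hm
  have h1 : q ^ (m:ℤ) = q ^ (-(m:ℤ)) := sub_eq_zero.mp h
  have h2 : q ^ (2*m : ℕ) = q ^ ((m:ℤ)) * q ^ ((m:ℤ)) := by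
    rw [← zpow_natCast q (2*m), ← zpow_add₀ hq]
    congr 1
    push_cast
    ring
  rw [h2]
  nth_rewrite 1 [h1]
  rw [← zpow_add₀ hq]
  norm_num

lemma qfact_ne_zero (q : ℂ) (hq : q ≠ 0) (hd : q - q⁻¹ ≠ 0) (l n : ℕ) (hn : n ≤ l)
    (hroot : ∀ m : ℕ, 1 ≤ m → m ≤ l → q ^ (2*m) ≠ 1) : qfact q n ≠ 0 := by
  unfold qfact
  apply Finset.prod_ne_zero_iff.mpr
  intro m hm
  exact qint_ne_zero q hq hd (m+1)
    (hroot (m+1) (Nat.succ_le_succ (Nat.zero_le m)) (le_trans (Finset.mem_range.mp hm) hn))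

lemma qbinom_ne_zero (q : ℂ) (hq : q ≠ 0) (hd : q - q⁻¹ ≠ 0) (l n : ℕ) (hn : n ≤ l)
    (hroot : ∀ m : ℕ, 1 ≤ m → m ≤ l → q ^ (2*m) ≠ 1) : qbinom q l n ≠ 0 := by
  unfold qbinom
  exact div_ne_zero (qfact_ne_zero q hq hd l l le_rfl hroot)
    (mul_ne_zero (qfact_ne_zero q hq hd l (l-n) (Nat.sub_le l n) hroot)
      (qfact_ne_zero q hq hd l n hn hroot))

lemma rankOne_smul_right {l : ℕ} (u v : SpinVec l) (c : ℂ) :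
    rankOne u (c • v) = c • rankOne u v := by
  ext ε ε'; simp [rankOne]; ring

lemma rankOne_sum_right {l : ℕ} {α : Type*} (u : SpinVec l) (s : Finset α) (f : α → SpinVec l) :
    rankOne u (∑ x ∈ s, f x) = ∑ x ∈ s, rankOne u (f x) := by
  ext ε ε'; simp [rankOne, Matrix.sum_apply, Finset.mul_sum]

lemma scalar_combine (x y : ℂ) (hx : x ≠ 0) (p p' c d e f g g' : ℂ)
    (h : p + p' = c + d + e + f + g + g') :
    y * Complex.exp p * Complex.exp p' =
      x * y * Complex.exp c * Complex.exp d *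
        (Complex.exp e * Complex.exp f * (x⁻¹ * Complex.exp g * Complex.exp g')) := by
  have hcol : ∀ a b : ℂ, Complex.exp a * Complex.exp b = Complex.exp (a + b) :=
    fun a b => (Complex.exp_add a b).symm
  rw [show x * y * Complex.exp c * Complex.exp d *
        (Complex.exp e * Complex.exp f * (x⁻¹ * Complex.exp g * Complex.exp g'))
      = (x * x⁻¹) * (y * (Complex.exp c * Complex.exp d * Complex.exp e * Complex.exp f *
          Complex.exp g * Complex.exp g')) from by ring,
    mul_inv_cancel₀ hx, one_mul, hcol, hcol, hcol, hcol, hcol, mul_assoc, hcol, h]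


/-- Reduction formula for the spin-`ℓ/2` elementary operator: for every
fixed `A` with `|A| = i` (with `q = e^η`, `χ = ⊗_k diag(1, e^{ξ₁−(k−1)η})`),
`||ℓ,i⟩⟨ℓ,j|| = [ℓ choose i]_q [ℓ choose j]_q^{−1} q^{i(i−1)/2 − j(j−1)/2} e^{−(i−j)ξ₁}
  · P^{(ℓ)} · Σ_{|B|=j} χ |1_A⟩⟨1_B| χ⁻¹`;
in particular the right-hand side is independent of the choice of `A`. -/
theorem reduction_formula (ℓ : ℕ) (η ξ₁ : ℂ) (i j : ℕ)
    (hi1 : 1 ≤ i) (hil : i ≤ ℓ) (hj1 : 1 ≤ j) (hjl : j ≤ ℓ)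
    (hroot : ∀ m : ℕ, 1 ≤ m → m ≤ ℓ → Complex.exp η ^ (2 * m) ≠ 1)
    (A : Finset (Fin ℓ)) (hA : A.card = i) :
    rankOne (hv (Complex.exp η) ℓ i) (cv (Complex.exp η) ℓ j)
      = (qbinom (Complex.exp η) ℓ i * (qbinom (Complex.exp η) ℓ j)⁻¹ *
          Complex.exp η ^ ((i : ℤ) * ((i : ℤ) - 1) / 2 - (j : ℤ) * ((j : ℤ) - 1) / 2) *
          Complex.exp (-(((i : ℂ) - (j : ℂ)) * ξ₁))) •
        (proj (Complex.exp η) ℓ *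
          ∑ B ∈ Finset.powersetCard j (Finset.univ : Finset (Fin ℓ)),
            gaugeM (fun k : Fin ℓ => ξ₁ - (k.val : ℂ) * η) * rankOne (bvec A) (bvec B) *
              (gaugeM (fun k : Fin ℓ => ξ₁ - (k.val : ℂ) * η))⁻¹) := by
  set q := Complex.exp η with hqdef
  have hq : q ≠ 0 := Complex.exp_ne_zero η
  have hl1 : 1 ≤ ℓ := le_trans hi1 hil
  have hd : q - q⁻¹ ≠ 0 := by
    intro h
    apply hroot 1 le_rfl hl1
    have h1 : q = q⁻¹ := sub_eq_zero.mp h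
    calc q ^ (2*1) = q * q := by ring
      _ = q * q⁻¹ := by nth_rewrite 2 [h1]; rfl
      _ = 1 := mul_inv_cancel₀ hq
  have hbi : qbinom q ℓ i ≠ 0 := qbinom_ne_zero q hq hd ℓ i hil hroot
  set w : Fin ℓ → ℂ := fun k => ξ₁ - (k.val : ℂ) * η with hw
  rw [gauge_inv]
  rw [Finset.sum_congr rfl (fun B _ => by
    rw [gauge_mul_rankOne, Matrix.smul_mul, rankOne_mul_gauge, smul_smul])]
  rw [Finset.mul_sum]
  rw [Finset.sum_congr rfl (fun B _ => by
    rw [Matrix.mul_smul, proj_mul_rankOne q ℓ A (le_of_eq_of_le hA hil), smul_smul, hA])]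
  rw [cv, rankOne_smul_right, rankOne_sum_right, Finset.smul_sum, Finset.smul_sum]
  rw [Finset.sum_congr rfl (fun B _ => by
    rw [rankOne_smul_right, smul_smul])]
  apply Finset.sum_congr rfl
  intro B hB
  rw [smul_smul]
  congr 1
  have hBj : B.card = j := Finset.mem_powersetCard_univ.mp hB
  have hzpow : ∀ z : ℤ, q ^ z = Complex.exp ((z:ℂ) * η) :=
    fun z => (Complex.exp_int_mul η z).symm
  have hSAv : ∑ s ∈ A, ((s.val:ℕ):ℂ) = ((siteSum A : ℤ):ℂ) - i := by
    rw [siteSum]; push_cast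
    rw [Finset.sum_add_distrib, Finset.sum_const, hA]; push_cast; ring
  have hSBv : ∑ s ∈ B, ((s.val:ℕ):ℂ) = ((siteSum B : ℤ):ℂ) - j := by
    rw [siteSum]; push_cast
    rw [Finset.sum_add_distrib, Finset.sum_const, hBj]; push_cast; ring
  have hSA : ∑ s ∈ A, w s = (i:ℂ) * ξ₁ - (((siteSum A : ℤ):ℂ) - i) * η := by
    simp only [hw]
    rw [Finset.sum_sub_distrib, Finset.sum_const, hA, ← Finset.sum_mul, hSAv,
      nsmul_eq_mul]
  have hSB : ∑ s ∈ B, -w s = -((j:ℂ) * ξ₁) + (((siteSum B : ℤ):ℂ) - j) * η := by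
    rw [Finset.sum_neg_distrib, hw]
    simp only
    rw [Finset.sum_sub_distrib, Finset.sum_const, hBj, ← Finset.sum_mul, hSBv,
      nsmul_eq_mul]
    ring
  simp only [hwt, hzpow, hSA, hSB]
  apply scalar_combine _ _ hbi
  obtain ⟨a, ha⟩ := Int.even_mul_succ_self ((i:ℤ) - 1)
  obtain ⟨b, hb⟩ := Int.even_mul_succ_self ((j:ℤ) - 1)
  have ha' : (i:ℤ) * ((i:ℤ) - 1) = 2 * a := by linear_combination ha
  have hb' : (j:ℤ) * ((j:ℤ) - 1) = 2 * b := by linear_combination hb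
  have hTi : (i:ℤ) * ((i:ℤ) - 1) / 2 = a := by
    rw [ha', Int.mul_ediv_cancel_left a (by norm_num)]
  have hTj : (j:ℤ) * ((j:ℤ) - 1) / 2 = b := by
    rw [hb', Int.mul_ediv_cancel_left b (by norm_num)]
  rw [hTi, hTj]
  push_cast
  have hai : 2 * (a:ℂ) = (i:ℂ) * ((i:ℂ) - 1) := by exact_mod_cast ha'.symm
  have hbj : 2 * (b:ℂ) = (j:ℂ) * ((j:ℂ) - 1) := by exact_mod_cast hb'.symm
  linear_combination -η * hai + η * hbj
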